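/- For all positive integers m and n, the following identity of rational numbers holds: Σ_{k=−n}^{n} (−1)^k / (2n−2k+1) · C(k, m) · binom(4n+1, 2n+2k+1) = Σ_{k=1}^{n} Σ_{j=−k}^{k} 4^(n−k) (−1)^j / (2n−2k+1) · C(j, m) · binom(2n, 2k) · binom(2k, k−j). (In the paper the outer sum on the right runs over all k ≥ 1, but binom(2n, 2k) = 0 for k > n, so it truncates at k = n.) -/

import Mathlib

open Finset

def genChoose (x : ℤ) (m : ℕ) : ℚ :=
  (∏ i ∈ Finset.range m, ((x : ℚ) - i)) / Nat.factorial m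

lemma genChoose_zero (x : ℤ) : genChoose x 0 = 1 := by simp [genChoose]

lemma genChoose_zero_left {m : ℕ} (hm : 0 < m) : genChoose 0 m = 0 := by
  rw [genChoose, Finset.prod_eq_zero (Finset.mem_range.2 hm : (0:ℕ) ∈ Finset.range m)]
  · simp
  · simp

lemma genChoose_succ (x : ℤ) (m : ℕ) :
    genChoose (x + 1) (m + 1) = genChoose x (m + 1) + genChoose x m := by
  have h1 : (∏ i ∈ range (m+1), (((x:ℚ)+1) - i)) = (∏ i ∈ range m, ((x:ℚ) - i)) * ((x:ℚ)+1) := by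
    rw [Finset.prod_range_succ']
    congr 1
    · exact Finset.prod_congr rfl fun i _ => by push_cast; ring
    · simp
  have h2 : (∏ i ∈ range (m+1), ((x:ℚ) - i)) = (∏ i ∈ range m, ((x:ℚ) - i)) * ((x:ℚ) - m) := by
    rw [Finset.prod_range_succ]
  simp only [genChoose]
  push_cast
  rw [h1, h2, Nat.factorial_succ]
  push_cast
  have hf : (Nat.factorial m : ℚ) ≠ 0 := by exact_mod_cast Nat.factorial_ne_zero m
  field_simp
  ring

lemma genChoose_vandermonde (a : ℕ) (b : ℤ) (m : ℕ) :
    genChoose ((a : ℤ) + b) m = ∑ i ∈ range (m + 1), (a.choose i : ℚ) * genChoose b (m - i) := by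
  induction a generalizing m with
  | zero =>
    rw [Finset.sum_eq_single 0]
    · simp
    · intro i _ hi; simp [Nat.choose_eq_zero_of_lt (Nat.pos_of_ne_zero hi)]
    · simp
  | succ a ih =>
    have key : ((a:ℤ) + 1 + b) = ((a:ℤ) + b) + 1 := by ring
    push_cast
    rw [key]
    cases m with
    | zero =>
      rw [Finset.sum_eq_single 0] <;> simp [genChoose_zero]
    | succ m =>
      rw [genChoose_succ, ih (m+1), ih m]
      rw [Finset.sum_range_succ' (fun i => ((a+1 : ℕ).choose i : ℚ) * genChoose b (m + 1 - i)) (m+1)]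
      rw [Finset.sum_range_succ' (fun i => ((a : ℕ).choose i : ℚ) * genChoose b (m + 1 - i)) (m+1)]
      simp only [Nat.choose_succ_succ, Nat.cast_add, Nat.succ_sub_succ, add_mul,
        Finset.sum_add_distrib, Nat.sub_zero, Nat.choose_zero_right, Nat.cast_one]
      ring

lemma alt_sum_cc (N p : ℕ) :
    ∑ a ∈ range (N + 1), (-1 : ℚ) ^ a * (N.choose a) * (a.choose p)
      = if p = N then (-1 : ℚ) ^ N else 0 := by
  by_cases hp : p ≤ N
  · have h1 : ∑ a ∈ range (N + 1), (-1 : ℚ) ^ a * (N.choose a) * (a.choose p)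
        = ∑ b ∈ range (N + 1 - p), (-1 : ℚ) ^ (b + p) * (N.choose (b + p)) * ((b + p).choose p) := by
      rw [Finset.range_eq_Ico, ← Finset.sum_Ico_consecutive _ (Nat.zero_le p) (by omega : p ≤ N + 1)]
      have hz : ∑ a ∈ Finset.Ico 0 p, (-1:ℚ)^a * (N.choose a) * (a.choose p) = 0 := by
        apply Finset.sum_eq_zero
        intro i hi
        have : i < p := (Finset.mem_Ico.1 hi).2
        simp [Nat.choose_eq_zero_of_lt this]
      rw [hz, zero_add, Finset.sum_Ico_eq_sum_range]
      exact Finset.sum_congr rfl fun b _ => by rw [add_comm p b]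
    rw [h1]
    have h2 : ∀ b ∈ range (N + 1 - p), (-1 : ℚ) ^ (b + p) * (N.choose (b + p)) * ((b + p).choose p)
        = (-1:ℚ)^p * (N.choose p) * ((-1:ℚ)^b * ((N - p).choose b)) := by
      intro b hb
      have hbN : b + p ≤ N := by have := Finset.mem_range.1 hb; omega
      have hcm := Nat.choose_mul (n := N) (k := b + p) (s := p) (Nat.le_add_left p b)
      rw [show b + p - p = b by omega] at hcm
      have : ((N.choose (b+p) : ℚ)) * ((b+p).choose p) = (N.choose p : ℚ) * ((N-p).choose b) := by
        exact_mod_cast congrArg (Nat.cast (R := ℚ)) hcm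
      calc (-1 : ℚ) ^ (b + p) * (N.choose (b + p)) * ((b + p).choose p)
          = (-1:ℚ)^(b+p) * ((N.choose (b+p) : ℚ) * ((b+p).choose p)) := by ring
        _ = (-1:ℚ)^(b+p) * ((N.choose p : ℚ) * ((N-p).choose b)) := by rw [this]
        _ = (-1:ℚ)^p * (N.choose p) * ((-1:ℚ)^b * ((N - p).choose b)) := by
            rw [pow_add]; ring
    rw [Finset.sum_congr rfl h2, ← Finset.mul_sum]
    have h3 : ∑ b ∈ range (N + 1 - p), (-1:ℚ)^b * ((N - p).choose b)
        = if N - p = 0 then 1 else 0 := by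
      have := @Int.alternating_sum_range_choose (N - p)
      rw [show N + 1 - p = (N - p) + 1 by omega]
      exact_mod_cast congrArg (Int.cast (R := ℚ)) this
    rw [h3]
    by_cases hpN : p = N
    · subst hpN; simp
    · rw [if_neg (by omega : ¬ N - p = 0), if_neg hpN, mul_zero]
  · rw [if_neg (by omega : ¬ p = N)]
    apply Finset.sum_eq_zero
    intro a ha
    have : a < p := by have := Finset.mem_range.1 ha; omega
    simp [Nat.choose_eq_zero_of_lt this]

lemma sum_split_odd (F : ℕ → ℚ) (N : ℕ) :
    ∑ j ∈ range (2 * N + 1), F j * (1 - (-1 : ℚ) ^ j) = 2 * ∑ j ∈ range N, F (2 * j + 1) := by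
  induction N with
  | zero => simp
  | succ N ih =>
    rw [show 2 * (N + 1) + 1 = (2 * N + 1) + 1 + 1 by ring, Finset.sum_range_succ,
      Finset.sum_range_succ, ih, Finset.sum_range_succ]
    have e1 : (-1 : ℚ) ^ (2 * N + 1) = -1 := by
      rw [pow_succ, pow_mul]; simp
    have e2 : (-1 : ℚ) ^ (2 * N + 1 + 1) = 1 := by
      rw [pow_succ, e1]; ring
    rw [e1, e2]; ring

lemma sum_split_even (F : ℕ → ℚ) (N : ℕ) :
    ∑ j ∈ range (2 * N + 2), F j * (1 + (-1 : ℚ) ^ j) = 2 * ∑ k ∈ range (N + 1), F (2 * k) := by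
  induction N with
  | zero =>
    norm_num [Finset.sum_range_succ, mul_comm]
  | succ N ih =>
    have e1 : (-1 : ℚ) ^ (2 * N + 2) = 1 := by
      rw [show 2 * N + 2 = 2 * (N + 1) by ring, pow_mul]; norm_num
    have e2 : (-1 : ℚ) ^ (2 * N + 2 + 1) = -1 := by rw [pow_succ, e1]; ring
    rw [show 2 * (N + 1) + 2 = (2 * N + 2) + 1 + 1 by ring, Finset.sum_range_succ,
      Finset.sum_range_succ, ih, e1, e2]
    rw [Finset.sum_range_succ (fun k => F (2 * k)) (N + 1)]
    rw [show 2 * (N + 1) = 2 * N + 2 by ring]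
    ring

lemma odd_binom (a b : ℚ) (N : ℕ) :
    (a + b) ^ (2 * N) - (a - b) ^ (2 * N)
      = 2 * ∑ j ∈ range N, ((2 * N).choose (2 * j + 1) : ℚ) * b ^ (2 * j + 1) * a ^ (2 * N - (2 * j + 1)) := by
  have h1 : (a + b) ^ (2 * N) = ∑ k ∈ range (2 * N + 1), b ^ k * a ^ (2 * N - k) * ((2 * N).choose k : ℚ) := by
    rw [show a + b = b + a by ring, add_pow]
  have h2 : (a - b) ^ (2 * N) = ∑ k ∈ range (2 * N + 1), (-1:ℚ)^k * b ^ k * a ^ (2 * N - k) * ((2 * N).choose k : ℚ) := by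
    rw [show a - b = (-b) + a by ring, add_pow]
    exact Finset.sum_congr rfl fun k _ => by rw [neg_pow]
  rw [h1, h2, ← Finset.sum_sub_distrib]
  have := sum_split_odd (fun k => b ^ k * a ^ (2 * N - k) * ((2 * N).choose k : ℚ)) N
  rw [show 2*N+1 = 2*N+1 from rfl] at this
  calc ∑ k ∈ range (2 * N + 1), (b ^ k * a ^ (2 * N - k) * ((2 * N).choose k : ℚ)
          - (-1:ℚ)^k * b ^ k * a ^ (2 * N - k) * ((2 * N).choose k : ℚ))
      = ∑ k ∈ range (2 * N + 1), (b ^ k * a ^ (2 * N - k) * ((2 * N).choose k : ℚ)) * (1 - (-1:ℚ)^k) := by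
        exact Finset.sum_congr rfl fun k _ => by ring
    _ = 2 * ∑ j ∈ range N, b ^ (2*j+1) * a ^ (2 * N - (2*j+1)) * ((2 * N).choose (2*j+1) : ℚ) := this
    _ = 2 * ∑ j ∈ range N, ((2 * N).choose (2 * j + 1) : ℚ) * b ^ (2 * j + 1) * a ^ (2 * N - (2 * j + 1)) := by
        rw [Finset.mul_sum, Finset.mul_sum]
        exact Finset.sum_congr rfl fun j _ => by ring

lemma even_binom (a b : ℚ) (N : ℕ) :
    (a + b) ^ (2 * N + 1) + (a - b) ^ (2 * N + 1)
      = 2 * ∑ k ∈ range (N + 1), ((2 * N + 1).choose (2 * k) : ℚ) * b ^ (2 * k) * a ^ (2 * N + 1 - 2 * k) := by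
  have h1 : (a + b) ^ (2 * N + 1) = ∑ k ∈ range (2 * N + 2), b ^ k * a ^ (2 * N + 1 - k) * ((2 * N + 1).choose k : ℚ) := by
    rw [show a + b = b + a by ring, add_pow]
  have h2 : (a - b) ^ (2 * N + 1) = ∑ k ∈ range (2 * N + 2), (-1:ℚ)^k * b ^ k * a ^ (2 * N + 1 - k) * ((2 * N + 1).choose k : ℚ) := by
    rw [show a - b = (-b) + a by ring, add_pow]
    exact Finset.sum_congr rfl fun k _ => by rw [neg_pow]
  rw [h1, h2, ← Finset.sum_add_distrib]
  have := sum_split_even (fun k => b ^ k * a ^ (2 * N + 1 - k) * ((2 * N + 1).choose k : ℚ)) N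
  calc ∑ k ∈ range (2 * N + 2), (b ^ k * a ^ (2 * N + 1 - k) * ((2 * N + 1).choose k : ℚ)
          + (-1:ℚ)^k * b ^ k * a ^ (2 * N + 1 - k) * ((2 * N + 1).choose k : ℚ))
      = ∑ k ∈ range (2 * N + 2), (b ^ k * a ^ (2 * N + 1 - k) * ((2 * N + 1).choose k : ℚ)) * (1 + (-1:ℚ)^k) := by
        exact Finset.sum_congr rfl fun k _ => by ring
    _ = 2 * ∑ k ∈ range (N + 1), b ^ (2*k) * a ^ (2 * N + 1 - 2*k) * ((2 * N + 1).choose (2*k) : ℚ) := this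
    _ = 2 * ∑ k ∈ range (N + 1), ((2 * N + 1).choose (2 * k) : ℚ) * b ^ (2 * k) * a ^ (2 * N + 1 - 2 * k) := by
        rw [Finset.mul_sum, Finset.mul_sum]
        exact Finset.sum_congr rfl fun k _ => by ring

lemma key_eval' (n : ℕ) (u : ℚ) (hu : u ≠ 0) :
    ∑ j ∈ range (2 * n + 1), ((4 * n + 2).choose (2 * j + 1) : ℚ) * u ^ (2 * j)
      = 2 * ∑ k ∈ range (n + 1), ((2 * n + 1).choose (2 * k) : ℚ) * (1 + u ^ 2) ^ (2 * k) * (2 * u) ^ (2 * (n - k)) := by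
  apply mul_left_cancel₀ hu
  have h1 := odd_binom 1 u (2 * n + 1)
  simp only [one_pow, mul_one] at h1
  rw [show 2 * (2 * n + 1) = 4 * n + 2 by ring] at h1
  have h2 := even_binom (2 * u) (1 + u ^ 2) n
  have e : (2 * u + (1 + u ^ 2)) ^ (2 * n + 1) + (2 * u - (1 + u ^ 2)) ^ (2 * n + 1)
      = (1 + u) ^ (4 * n + 2) - (1 - u) ^ (4 * n + 2) := by
    have a1 : (2 * u + (1 + u ^ 2)) = (1 + u) ^ 2 := by ring
    have a2 : (2 * u - (1 + u ^ 2)) = -((1 - u) ^ 2) := by ring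
    rw [a1, a2, Odd.neg_pow ⟨n, by ring⟩, ← pow_mul, ← pow_mul,
      show 2 * (2 * n + 1) = 4 * n + 2 by ring]
    ring
  rw [e] at h2
  have lhs_eq : u * ∑ j ∈ range (2 * n + 1), ((4 * n + 2).choose (2 * j + 1) : ℚ) * u ^ (2 * j)
      = ((1 + u) ^ (4 * n + 2) - (1 - u) ^ (4 * n + 2)) / 2 := by
    rw [Finset.mul_sum]
    have : ∀ j ∈ range (2 * n + 1), u * (((4 * n + 2).choose (2 * j + 1) : ℚ) * u ^ (2 * j))
        = ((4 * n + 2).choose (2 * j + 1) : ℚ) * u ^ (2 * j + 1) := by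
      intro j _; rw [pow_succ]; ring
    rw [Finset.sum_congr rfl this]
    rw [eq_div_iff (two_ne_zero), mul_comm _ (2:ℚ), ← h1]
  have rhs_eq : u * (2 * ∑ k ∈ range (n + 1), ((2 * n + 1).choose (2 * k) : ℚ) * (1 + u ^ 2) ^ (2 * k) * (2 * u) ^ (2 * (n - k)))
      = ((1 + u) ^ (4 * n + 2) - (1 - u) ^ (4 * n + 2)) / 2 := by
    rw [mul_comm u, mul_assoc, Finset.sum_mul]
    have : ∀ k ∈ range (n + 1), ((2 * n + 1).choose (2 * k) : ℚ) * (1 + u ^ 2) ^ (2 * k) * (2 * u) ^ (2 * (n - k)) * u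
        = ((2 * n + 1).choose (2 * k) : ℚ) * (1 + u ^ 2) ^ (2 * k) * (2 * u) ^ (2 * n + 1 - 2 * k) / 2 := by
      intro k hk
      have hkn : k ≤ n := Nat.lt_succ_iff.1 (Finset.mem_range.1 hk)
      rw [show 2 * n + 1 - 2 * k = 2 * (n - k) + 1 by omega, pow_succ]
      ring
    rw [Finset.sum_congr rfl this, ← Finset.sum_div, h2]
    ring
  rw [lhs_eq, rhs_eq]

lemma neg_one_pow_add_cancel (j n : ℕ) : (-1:ℚ)^(j+n) * (-1:ℚ)^j = (-1:ℚ)^n := by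
  rw [← pow_add, show j + n + j = 2 * j + n by ring, pow_add, pow_mul]
  norm_num

lemma neg_one_pow_sub_cancel {k n : ℕ} (h : k ≤ n) : (-1:ℚ)^k * (-1:ℚ)^(n-k) = (-1:ℚ)^n := by
  rw [← pow_add, show k + (n - k) = n by omega]

open Polynomial in
lemma eval_AB (n : ℕ) (u : ℚ) (hu : u ≠ 0) :
    Polynomial.eval (-1 - u^2) (∑ j ∈ range (2*n+1),
        C ((-1:ℚ)^(j+n) * ((4*n+2).choose (2*j+1))) * (X + 1)^j)
    = Polynomial.eval (-1 - u^2) (∑ k ∈ range (n+1),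
        C ((2:ℚ) * 4^(n-k) * (-1)^k * ((2*n+1).choose (2*k))) * ((X + 1)^(n-k) * X^(2*k))) := by
  rw [Polynomial.eval_finset_sum, Polynomial.eval_finset_sum]
  simp only [Polynomial.eval_mul, Polynomial.eval_pow, Polynomial.eval_add, Polynomial.eval_one,
    Polynomial.eval_C, Polynomial.eval_X]
  have l : ∀ j ∈ range (2*n+1), (-1:ℚ)^(j+n) * ((4*n+2).choose (2*j+1)) * (-1 - u^2 + 1)^j
      = (-1:ℚ)^n * (((4*n+2).choose (2*j+1) : ℚ) * u^(2*j)) := by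
    intro j _
    have hnp : (-(u^2) : ℚ)^j = (-1:ℚ)^j * u^(2*j) := by rw [neg_pow, ← pow_mul]
    rw [show (-1 - u^2 + 1 : ℚ) = -(u^2) by ring, hnp]
    calc (-1:ℚ)^(j+n) * ((4*n+2).choose (2*j+1)) * ((-1)^j * u^(2*j))
        = ((-1:ℚ)^(j+n) * (-1)^j) * (((4*n+2).choose (2*j+1) : ℚ) * u^(2*j)) := by ring
      _ = (-1:ℚ)^n * (((4*n+2).choose (2*j+1) : ℚ) * u^(2*j)) := by
          rw [neg_one_pow_add_cancel]
  have r : ∀ k ∈ range (n+1), (2:ℚ) * 4^(n-k) * (-1)^k * ((2*n+1).choose (2*k)) *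
        ((-1 - u^2 + 1)^(n-k) * (-1 - u^2)^(2*k))
      = (-1:ℚ)^n * (2 * (((2*n+1).choose (2*k) : ℚ) * (1 + u^2)^(2*k) * (2*u)^(2*(n-k)))) := by
    intro k hk
    have hkn : k ≤ n := Nat.lt_succ_iff.1 (Finset.mem_range.1 hk)
    have hnp : (-(u^2) : ℚ)^(n-k) = (-1:ℚ)^(n-k) * u^(2*(n-k)) := by rw [neg_pow, ← pow_mul]
    rw [show (-1 - u^2 + 1 : ℚ) = -(u^2) by ring, hnp,
      show (-1 - u^2 : ℚ) = -(1 + u^2) by ring, Even.neg_pow (even_two_mul k),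
      show ((2:ℚ)*u)^(2*(n-k)) = 4^(n-k) * u^(2*(n-k)) by
        rw [mul_pow, pow_mul]; norm_num]
    calc (2:ℚ) * 4^(n-k) * (-1)^k * ((2*n+1).choose (2*k)) * ((-1)^(n-k) * u^(2*(n-k)) * (1+u^2)^(2*k))
        = ((-1:ℚ)^k * (-1)^(n-k)) * (2 * (((2*n+1).choose (2*k) : ℚ) * (1+u^2)^(2*k) * (4^(n-k) * u^(2*(n-k))))) := by ring
      _ = _ := by rw [neg_one_pow_sub_cancel hkn]
  rw [Finset.sum_congr rfl l, Finset.sum_congr rfl r, ← Finset.mul_sum, ← Finset.mul_sum,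
    ← Finset.mul_sum]
  congr 1
  exact key_eval' n u hu

open Polynomial in
lemma polyAB (n : ℕ) :
    (∑ j ∈ range (2*n+1), C ((-1:ℚ)^(j+n) * ((4*n+2).choose (2*j+1))) * (X + 1)^j)
    = ∑ k ∈ range (n+1), C ((2:ℚ) * 4^(n-k) * (-1)^k * ((2*n+1).choose (2*k))) *
        ((X + 1)^(n-k) * X^(2*k)) := by
  apply Polynomial.eq_of_infinite_eval_eq
  apply Set.infinite_of_injective_forall_mem (f := fun m : ℕ => (-1 : ℚ) - ((m:ℚ)+1)^2)
  · intro a b h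
    simp only at h
    have h2 : ((a:ℚ)+1)^2 = ((b:ℚ)+1)^2 := by linarith
    have h3 : (a:ℚ)+1 = (b:ℚ)+1 ∨ (a:ℚ)+1 = -((b:ℚ)+1) := sq_eq_sq_iff_eq_or_eq_neg.1 h2
    have ha : (0:ℚ) < (a:ℚ)+1 := by positivity
    have hb : (0:ℚ) < (b:ℚ)+1 := by positivity
    rcases h3 with h3 | h3
    · exact_mod_cast (by linarith : (a:ℚ) = b)
    · linarith
  · intro m
    simp only [Set.mem_setOf_eq]
    have := eval_AB n ((m:ℚ)+1) (by positivity)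
    rw [show (-1 : ℚ) - ((m:ℚ)+1)^2 = -1 - ((m:ℚ)+1)^2 by ring]
    exact this

open Polynomial in
lemma coeff_AB (n i : ℕ) :
    ∑ j ∈ range (2*n+1), (-1:ℚ)^(j+n) * ((4*n+2).choose (2*j+1)) * (j.choose i)
    = ∑ k ∈ range (n+1), (2:ℚ) * 4^(n-k) * (-1)^k * ((2*n+1).choose (2*k)) *
        (if 2*k ≤ i then ((n-k).choose (i-2*k) : ℚ) else 0) := by
  have h := congrArg (fun p => Polynomial.coeff p i) (polyAB n)
  simp only [Polynomial.finset_sum_coeff, Polynomial.coeff_C_mul, Polynomial.coeff_mul_X_pow',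
    Polynomial.coeff_X_add_one_pow, mul_assoc] at h
  calc ∑ j ∈ range (2*n+1), (-1:ℚ)^(j+n) * ((4*n+2).choose (2*j+1)) * (j.choose i)
      = ∑ j ∈ range (2*n+1), (-1:ℚ)^(j+n) * (((4*n+2).choose (2*j+1) : ℚ) * (j.choose i)) :=
        Finset.sum_congr rfl fun j _ => by ring
    _ = ∑ k ∈ range (n+1), (2:ℚ) * (4^(n-k) * ((-1)^k * (((2*n+1).choose (2*k) : ℚ) *
          if 2*k ≤ i then ((n-k).choose (i-2*k) : ℚ) else 0))) := h
    _ = ∑ k ∈ range (n+1), (2:ℚ) * 4^(n-k) * (-1)^k * ((2*n+1).choose (2*k)) *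
        (if 2*k ≤ i then ((n-k).choose (i-2*k) : ℚ) else 0) :=
        Finset.sum_congr rfl fun k _ => by ring

lemma sum_Icc_int (N : ℕ) (f : ℤ → ℚ) :
    ∑ k ∈ Finset.Icc (-(N:ℤ)) (N:ℤ), f k = ∑ j ∈ range (2*N+1), f ((j:ℤ) - N) := by
  refine Finset.sum_nbij' (fun k : ℤ => (k + N).toNat) (fun a : ℕ => (a:ℤ) - N) ?_ ?_ ?_ ?_ ?_
  · intro a ha
    simp only [Finset.mem_Icc] at ha
    simp only [Finset.mem_range]
    omega
  · intro a ha
    simp only [Finset.mem_range] at ha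
    simp only [Finset.mem_Icc]
    omega
  · intro a ha
    simp only [Finset.mem_Icc] at ha
    omega
  · intro a ha
    simp only [Finset.mem_range] at ha
    omega
  · intro a ha
    simp only [Finset.mem_Icc] at ha
    congr 1
    omega

lemma negOnePow_cast (a N : ℕ) : ((((a:ℤ) - N).negOnePow : ℤ) : ℚ) = (-1:ℚ)^(a+N) := by
  rw [Int.negOnePow_sub]
  push_cast [Int.coe_negOnePow_natCast]
  rw [pow_add]

lemma innerAlt (k m : ℕ) :
    ∑ j ∈ Finset.Icc (-(k:ℤ)) (k:ℤ), ((j.negOnePow : ℤ) : ℚ) * genChoose j m *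
        (((2*k).choose (((k:ℤ) - j).toNat)) : ℚ)
    = (-1:ℚ)^k * (if 2*k ≤ m then genChoose (-(k:ℤ)) (m - 2*k) else 0) := by
  rw [sum_Icc_int]
  have step1 : ∀ a ∈ range (2*k+1),
      ((((a:ℤ) - k).negOnePow : ℤ) : ℚ) * genChoose ((a:ℤ) - k) m *
        (((2*k).choose (((k:ℤ) - ((a:ℤ) - k)).toNat)) : ℚ)
      = (-1:ℚ)^k * ∑ p ∈ range (m+1), ((-1:ℚ)^a * ((2*k).choose a : ℚ) * (a.choose p : ℚ)) *
          genChoose (-(k:ℤ)) (m - p) := by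
    intro a ha
    have ha' : a ≤ 2*k := Nat.lt_succ_iff.1 (Finset.mem_range.1 ha)
    have e1 : (((k:ℤ) - ((a:ℤ) - k)).toNat) = 2*k - a := by omega
    have e2 : ((2*k).choose (2*k - a)) = (2*k).choose a := Nat.choose_symm ha'
    have e3 : genChoose ((a:ℤ) - k) m
        = ∑ p ∈ range (m+1), (a.choose p : ℚ) * genChoose (-(k:ℤ)) (m - p) := by
      rw [show (a:ℤ) - k = (a:ℤ) + (-(k:ℤ)) by ring]
      exact genChoose_vandermonde a (-(k:ℤ)) m
    rw [e1, e2, negOnePow_cast, e3, Finset.mul_sum, Finset.sum_mul, Finset.mul_sum]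
    refine Finset.sum_congr rfl fun p _ => ?_
    rw [pow_add]
    ring
  rw [Finset.sum_congr rfl step1, ← Finset.mul_sum]
  congr 1
  rw [Finset.sum_comm]
  have step2 : ∀ p ∈ range (m+1),
      ∑ a ∈ range (2*k+1), ((-1:ℚ)^a * ((2*k).choose a : ℚ) * (a.choose p : ℚ)) *
          genChoose (-(k:ℤ)) (m - p)
      = (if p = 2*k then (1:ℚ) else 0) * genChoose (-(k:ℤ)) (m - p) := by
    intro p _
    rw [← Finset.sum_mul]
    congr 1
    have := alt_sum_cc (2*k) p
    rw [this]
    rcases eq_or_ne p (2*k) with h | h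
    · rw [if_pos h, if_pos h, pow_mul]; norm_num
    · rw [if_neg h, if_neg h]
  rw [Finset.sum_congr rfl step2]
  have step3 : ∀ p ∈ range (m+1), (if p = 2*k then (1:ℚ) else 0) * genChoose (-(k:ℤ)) (m-p)
      = if p = 2*k then genChoose (-(k:ℤ)) (m-p) else 0 := fun p _ => by split <;> simp
  rw [Finset.sum_congr rfl step3,
    Finset.sum_ite_eq' (range (m+1)) (2*k) (fun p => genChoose (-(k:ℤ)) (m - p))]
  simp [Nat.lt_succ_iff]

lemma expand_ite (n k m : ℕ) (hk : k ≤ n) :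
    (if 2*k ≤ m then genChoose (-(k:ℤ)) (m-2*k) else 0)
    = ∑ p ∈ range (m+1), (if 2*k ≤ p then ((n-k).choose (p-2*k) : ℚ) else 0) *
        genChoose (-(n:ℤ)) (m-p) := by
  have body : ∀ p ∈ range (m+1), (if 2*k ≤ p then ((n-k).choose (p-2*k) : ℚ) else 0) *
      genChoose (-(n:ℤ)) (m-p)
      = if 2*k ≤ p then ((n-k).choose (p-2*k) : ℚ) * genChoose (-(n:ℤ)) (m-p) else 0 := by
    intro p _; split <;> simp
  rw [Finset.sum_congr rfl body, ← Finset.sum_filter]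
  have hfil : Finset.filter (fun p => 2*k ≤ p) (range (m+1)) = Finset.Ico (2*k) (m+1) := by
    ext p; simp [Finset.mem_filter, Finset.mem_range, Finset.mem_Ico]; omega
  rw [hfil]
  by_cases h : 2*k ≤ m
  · rw [if_pos h, Finset.sum_Ico_eq_sum_range]
    have hm1 : m + 1 - 2*k = (m - 2*k) + 1 := by omega
    rw [hm1]
    have : -(k:ℤ) = ((n-k : ℕ):ℤ) + (-(n:ℤ)) := by
      push_cast [Nat.cast_sub hk]; ring
    rw [this, genChoose_vandermonde (n-k) (-(n:ℤ)) (m - 2*k)]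
    refine Finset.sum_congr rfl fun q hq => ?_
    have hq' : q ≤ m - 2*k := Nat.lt_succ_iff.1 (Finset.mem_range.1 hq)
    rw [show 2*k + q - 2*k = q by omega, show m - (2*k + q) = m - 2*k - q by omega]
  · rw [if_neg h]
    have : Finset.Ico (2*k) (m+1) = ∅ := by
      apply Finset.Ico_eq_empty; omega
    rw [this, Finset.sum_empty]

lemma hz_lemma (n m : ℕ) (hm : 0 < m) :
    ∑ p ∈ range (m+1), ((n.choose p : ℚ)) * genChoose (-(n:ℤ)) (m-p) = 0 := by
  have h := genChoose_vandermonde n (-(n:ℤ)) m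
  rw [show (n:ℤ) + (-(n:ℤ)) = 0 by ring] at h
  rw [← h, genChoose_zero_left hm]

/-- For all positive integers `m`, `n`:
`∑_{k=−n}^{n} (−1)^k/(2n−2k+1) ⬝ C(k, m) ⬝ binom(4n+1, 2n+2k+1)
  = ∑_{k=1}^{n} ∑_{j=−k}^{k} 4^(n−k)(−1)^j/(2n−2k+1) ⬝ C(j, m) ⬝ binom(2n, 2k) binom(2k, k−j)`
(the outer sum over `k ≥ 1` truncates at `k = n` since `binom(2n, 2k) = 0` for `k > n`). -/
theorem genChoose_identity_even (m n : ℕ) (hm : 0 < m) (hn : 0 < n) :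
    ∑ k ∈ Finset.Icc (-(n : ℤ)) (n : ℤ),
      ((k.negOnePow : ℤ) : ℚ) / (2 * (n : ℚ) - 2 * (k : ℚ) + 1) * genChoose k m *
        (Nat.choose (4 * n + 1) (2 * (n : ℤ) + 2 * k + 1).toNat : ℚ)
    = ∑ k ∈ Finset.Icc 1 n, ∑ j ∈ Finset.Icc (-(k : ℤ)) (k : ℤ),
        (4 : ℚ) ^ (n - k) *
          ((j.negOnePow : ℤ) : ℚ) / (2 * (n : ℚ) - 2 * (k : ℚ) + 1) * genChoose j m *
          (Nat.choose (2 * n) (2 * k) : ℚ) *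
          (Nat.choose (2 * k) ((k : ℤ) - j).toNat : ℚ) := by
  set G : ℕ → ℚ := fun p => genChoose (-(n:ℤ)) (m-p) with hG
  set M : ℕ → ℚ := fun p => ∑ j ∈ range (2*n+1),
      (-1:ℚ)^(j+n) * ((4*n+2).choose (2*j+1)) * (j.choose p) with hM
  -- LHS transformation
  have hL : ∑ k ∈ Finset.Icc (-(n : ℤ)) (n : ℤ),
      ((k.negOnePow : ℤ) : ℚ) / (2 * (n : ℚ) - 2 * (k : ℚ) + 1) * genChoose k m *
        (Nat.choose (4 * n + 1) (2 * (n : ℤ) + 2 * k + 1).toNat : ℚ)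
      = ∑ p ∈ range (m+1), M p * G p / (4*n+2) := by
    rw [sum_Icc_int n]
    have L1 : ∀ j ∈ range (2*n+1),
        ((((j:ℤ) - n).negOnePow : ℤ) : ℚ) / (2 * (n : ℚ) - 2 * ((((j:ℤ) - (n:ℤ)) : ℤ) : ℚ) + 1) *
          genChoose ((j:ℤ) - n) m *
          (Nat.choose (4 * n + 1) (2 * (n : ℤ) + 2 * ((j:ℤ) - n) + 1).toNat : ℚ)
        = ∑ p ∈ range (m+1),
            (-1:ℚ)^(j+n) * ((4*n+2).choose (2*j+1)) * (j.choose p) * G p / (4*n+2) := by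
      intro j hj
      have hj' : j ≤ 2*n := Nat.lt_succ_iff.1 (Finset.mem_range.1 hj)
      have htn : (2 * (n:ℤ) + 2 * ((j:ℤ) - n) + 1).toNat = 2*j+1 := by omega
      have hcast : ((((j:ℤ) - (n:ℤ)) : ℤ) : ℚ) = (j:ℚ) - n := by push_cast; ring
      have hD : (0:ℚ) < 2 * (n:ℚ) - 2 * ((j:ℚ) - n) + 1 := by
        have : (j:ℚ) ≤ 2*n := by exact_mod_cast hj'
        linarith
      have hr : ((4*n+1).choose (2*j+1) : ℚ) / (2 * (n:ℚ) - 2 * ((j:ℚ) - n) + 1)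
          = ((4*n+2).choose (2*j+1) : ℚ) / (4*n+2) := by
        rw [div_eq_div_iff hD.ne' (by positivity)]
        have key := Nat.choose_mul_succ_eq (4*n+1) (2*j+1)
        have hsub : (4*n+1+1) - (2*j+1) = 4*n+1-2*j := by omega
        rw [hsub] at key
        have keyq : ((4*n+1).choose (2*j+1) : ℚ) * (4*n+2)
            = ((4*n+2).choose (2*j+1) : ℚ) * ((4*n+1-2*j : ℕ) : ℚ) := by
          exact_mod_cast key
        have hc2 : ((4*n+1-2*j : ℕ) : ℚ) = 2 * (n:ℚ) - 2 * ((j:ℚ) - n) + 1 := by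
          rw [Nat.cast_sub (by omega)]
          push_cast; ring
        rw [hc2] at keyq
        push_cast at keyq ⊢
        linarith [keyq]
      have e3 : genChoose ((j:ℤ) - n) m = ∑ p ∈ range (m+1), (j.choose p : ℚ) * G p := by
        rw [show (j:ℤ) - n = (j:ℤ) + (-(n:ℤ)) by ring]
        exact genChoose_vandermonde j (-(n:ℤ)) m
      rw [negOnePow_cast, htn, hcast, e3]
      calc (-1:ℚ)^(j+n) / (2 * (n:ℚ) - 2 * ((j:ℚ) - n) + 1) *
            (∑ p ∈ range (m+1), (j.choose p : ℚ) * G p) * ((4*n+1).choose (2*j+1) : ℚ)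
          = (∑ p ∈ range (m+1), (j.choose p : ℚ) * G p) *
              ((-1:ℚ)^(j+n) * (((4*n+1).choose (2*j+1) : ℚ) / (2 * (n:ℚ) - 2 * ((j:ℚ) - n) + 1))) := by
            ring
        _ = (∑ p ∈ range (m+1), (j.choose p : ℚ) * G p) *
              ((-1:ℚ)^(j+n) * (((4*n+2).choose (2*j+1) : ℚ) / (4*n+2))) := by rw [hr]
        _ = ∑ p ∈ range (m+1),
            (-1:ℚ)^(j+n) * ((4*n+2).choose (2*j+1)) * (j.choose p) * G p / (4*n+2) := by
            rw [Finset.sum_mul]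
            exact Finset.sum_congr rfl fun p _ => by ring
    rw [Finset.sum_congr rfl L1, Finset.sum_comm]
    refine Finset.sum_congr rfl fun p _ => ?_
    simp only [hM]
    rw [Finset.sum_mul, Finset.sum_div]
  have hR : ∑ k ∈ Finset.Icc 1 n, ∑ j ∈ Finset.Icc (-(k : ℤ)) (k : ℤ),
        (4 : ℚ) ^ (n - k) *
          ((j.negOnePow : ℤ) : ℚ) / (2 * (n : ℚ) - 2 * (k : ℚ) + 1) * genChoose j m *
          (Nat.choose (2 * n) (2 * k) : ℚ) *
          (Nat.choose (2 * k) ((k : ℤ) - j).toNat : ℚ)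
      = ∑ p ∈ range (m+1), (∑ k ∈ Finset.Icc 1 n, (2:ℚ) * 4^(n-k) * (-1)^k *
          ((2*n+1).choose (2*k)) * (if 2*k ≤ p then ((n-k).choose (p-2*k) : ℚ) else 0)) *
            G p / (4*n+2) := by
    have R1 : ∀ k ∈ Finset.Icc 1 n,
        (∑ j ∈ Finset.Icc (-(k : ℤ)) (k : ℤ),
          (4 : ℚ) ^ (n - k) *
            ((j.negOnePow : ℤ) : ℚ) / (2 * (n : ℚ) - 2 * (k : ℚ) + 1) * genChoose j m *
            (Nat.choose (2 * n) (2 * k) : ℚ) *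
            (Nat.choose (2 * k) ((k : ℤ) - j).toNat : ℚ))
        = ∑ p ∈ range (m+1), ((2:ℚ) * 4^(n-k) * (-1)^k *
            ((2*n+1).choose (2*k)) * (if 2*k ≤ p then ((n-k).choose (p-2*k) : ℚ) else 0)) *
              G p / (4*n+2) := by
      intro k hk
      obtain ⟨hk1, hk2⟩ := Finset.mem_Icc.1 hk
      have hD : (0:ℚ) < 2 * (n:ℚ) - 2 * (k:ℚ) + 1 := by
        have : (k:ℚ) ≤ n := by exact_mod_cast hk2
        linarith
      have step : (∑ j ∈ Finset.Icc (-(k : ℤ)) (k : ℤ),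
          (4 : ℚ) ^ (n - k) *
            ((j.negOnePow : ℤ) : ℚ) / (2 * (n : ℚ) - 2 * (k : ℚ) + 1) * genChoose j m *
            (Nat.choose (2 * n) (2 * k) : ℚ) *
            (Nat.choose (2 * k) ((k : ℤ) - j).toNat : ℚ))
          = (4 : ℚ) ^ (n - k) * ((2*n).choose (2*k) : ℚ) / (2 * (n : ℚ) - 2 * (k : ℚ) + 1) *
            ∑ j ∈ Finset.Icc (-(k : ℤ)) (k : ℤ), ((j.negOnePow : ℤ) : ℚ) * genChoose j m *
              (((2*k).choose (((k:ℤ) - j).toNat)) : ℚ) := by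
        rw [Finset.mul_sum]
        exact Finset.sum_congr rfl fun j _ => by ring
      rw [step, innerAlt k m, expand_ite n k m hk2, Finset.mul_sum, Finset.mul_sum]
      have hr2 : ((2*n).choose (2*k) : ℚ) / (2 * (n:ℚ) - 2 * (k:ℚ) + 1)
          = ((2*n+1).choose (2*k) : ℚ) / (2*(n:ℚ)+1) := by
        rw [div_eq_div_iff hD.ne' (by positivity)]
        have key := Nat.choose_mul_succ_eq (2*n) (2*k)
        have hsub : (2*n+1) - (2*k) = 2*n+1-2*k := by omega
        have keyq : ((2*n).choose (2*k) : ℚ) * ((2*n+1 : ℕ) : ℚ)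
            = ((2*n+1).choose (2*k) : ℚ) * ((2*n+1-2*k : ℕ) : ℚ) := by
          exact_mod_cast key
        have hc2 : ((2*n+1-2*k : ℕ) : ℚ) = 2 * (n:ℚ) - 2 * (k:ℚ) + 1 := by
          rw [Nat.cast_sub (by omega)]
          push_cast; ring
        rw [hc2] at keyq
        push_cast at keyq
        linarith [keyq]
      refine Finset.sum_congr rfl fun p _ => ?_
      have expand : (4 : ℚ) ^ (n - k) * ((2*n).choose (2*k) : ℚ) / (2 * (n : ℚ) - 2 * (k : ℚ) + 1) *
            ((-1:ℚ)^k * ((if 2*k ≤ p then ((n-k).choose (p-2*k) : ℚ) else 0) * G p))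
          = (4 : ℚ) ^ (n - k) * (-1:ℚ)^k * ((if 2*k ≤ p then ((n-k).choose (p-2*k) : ℚ) else 0) * G p) *
              (((2*n).choose (2*k) : ℚ) / (2 * (n : ℚ) - 2 * (k : ℚ) + 1)) := by ring
      rw [expand, hr2]
      have h4 : (4*(n:ℚ)+2) = 2*(2*(n:ℚ)+1) := by ring
      rw [h4]
      have h2n : (2*(n:ℚ)+1) ≠ 0 := by positivity
      field_simp
    rw [Finset.sum_congr rfl R1, Finset.sum_comm]
    refine Finset.sum_congr rfl fun p _ => ?_
    rw [Finset.sum_mul, Finset.sum_div]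
  rw [hL, hR]
  have hsplit : ∀ p, M p = 2*4^n*((n.choose p : ℚ)) + ∑ k ∈ Finset.Icc 1 n,
      (2:ℚ) * 4^(n-k) * (-1)^k * ((2*n+1).choose (2*k)) *
        (if 2*k ≤ p then ((n-k).choose (p-2*k) : ℚ) else 0) := by
    intro p
    simp only [hM]
    rw [coeff_AB n p]
    have hins : range (n+1) = insert 0 (Finset.Icc 1 n) := by
      ext x; simp only [Finset.mem_insert, Finset.mem_Icc, Finset.mem_range]; omega
    rw [hins, Finset.sum_insert (by simp)]
    congr 1
    norm_num
  calc ∑ p ∈ range (m+1), M p * G p / (4*(n:ℚ)+2)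
      = ∑ p ∈ range (m+1), (2*4^n*((n.choose p : ℚ)) * G p / (4*(n:ℚ)+2) +
          (∑ k ∈ Finset.Icc 1 n, (2:ℚ) * 4^(n-k) * (-1)^k * ((2*n+1).choose (2*k)) *
            (if 2*k ≤ p then ((n-k).choose (p-2*k) : ℚ) else 0)) * G p / (4*(n:ℚ)+2)) := by
        refine Finset.sum_congr rfl fun p _ => ?_
        rw [hsplit p]; ring
    _ = (2*4^n/(4*(n:ℚ)+2)) * (∑ p ∈ range (m+1), ((n.choose p : ℚ)) * G p) +
        ∑ p ∈ range (m+1), (∑ k ∈ Finset.Icc 1 n, (2:ℚ) * 4^(n-k) * (-1)^k *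
            ((2*n+1).choose (2*k)) *
            (if 2*k ≤ p then ((n-k).choose (p-2*k) : ℚ) else 0)) * G p / (4*(n:ℚ)+2) := by
        rw [Finset.sum_add_distrib, Finset.mul_sum]
        congr 1
        exact Finset.sum_congr rfl fun p _ => by ring
    _ = ∑ p ∈ range (m+1), (∑ k ∈ Finset.Icc 1 n, (2:ℚ) * 4^(n-k) * (-1)^k *
            ((2*n+1).choose (2*k)) *
            (if 2*k ≤ p then ((n-k).choose (p-2*k) : ℚ) else 0)) * G p / (4*(n:ℚ)+2) := by
        rw [hz_lemma n m hm]
        ring
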